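/- arXiv:1806.03263 — 2 statements merged into one kernel-verified Lean document; each statement's English description precedes it below -/
import Mathlib

section
/- Alternating local complementation on two adjacent vertices has period dividing 6: if i and j are adjacent in a simple graph G, then applying the composition LC_i ∘ LC_j three times returns G, i.e. (LC_i ∘ LC_j)^3(G) = G. -/
/-- Local complementation at a vertex `α`: edges between distinct neighbours of `α` are toggled,
all other adjacencies unchanged. -/
def localComplement {V : Type*} (G : SimpleGraph V) (α : V) : SimpleGraph V where
  Adj u v := u ≠ v ∧ Xor' (G.Adj u v) (G.Adj α u ∧ G.Adj α v)
  symm := by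
    constructor
    rintro u v ⟨hne, hx⟩
    refine ⟨hne.symm, ?_⟩
    rw [G.adj_comm v u]
    unfold Xor' at *
    rwa [and_comm (a := G.Adj α v)]
  loopless := ⟨fun v h => h.1 rfl⟩

lemma lc_adj {V : Type*} (G : SimpleGraph V) (α u v : V) :
    (localComplement G α).Adj u v ↔ u ≠ v ∧ Xor' (G.Adj u v) (G.Adj α u ∧ G.Adj α v) := Iff.rfl

set_option linter.unnecessarySeqFocus false in
/-- Local complementation is an involution. -/
lemma lc_invol {V : Type*} (G : SimpleGraph V) (α : V) :
    localComplement (localComplement G α) α = G := by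
  ext u v
  simp only [lc_adj, Xor', xor_def, G.irrefl]
  by_cases huv : u = v <;> by_cases hau : α = u <;> by_cases hav : α = v <;> subst_vars <;>
    simp_all <;> tauto

set_option maxHeartbeats 2000000 in
/-- Braid relation for local complementation at adjacent vertices. -/
lemma lc_braid {V : Type*} (G : SimpleGraph V) (i j : V) (h : G.Adj i j) :
    localComplement (localComplement (localComplement G i) j) i
      = localComplement (localComplement (localComplement G j) i) j := by
  ext u v
  have hji := h.symm
  simp only [lc_adj, Xor', xor_def, G.irrefl, h, hji]
  by_cases huv : u = v <;> by_cases hiu : i = u <;> by_cases hju : j = u <;>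
    by_cases hiv : i = v <;> by_cases hjv : j = v <;>
    by_cases a1 : G.Adj u v <;> by_cases a2 : G.Adj i u <;> by_cases a3 : G.Adj i v <;>
    by_cases a4 : G.Adj j u <;> by_cases a5 : G.Adj j v <;>
    (have hne := h.ne; have hne' := h.ne'; simp_all)

/-- Alternating local complementation on two adjacent vertices has period dividing 6:
applying `LC_i ∘ LC_j` three times returns the original graph. -/
theorem localComplement_alternating_period_six {V : Type*} (G : SimpleGraph V) (i j : V)
    (h : G.Adj i j) :
    (fun H => localComplement (localComplement H j) i)^[3] G = G := by
  simp only [Function.iterate_succ, Function.iterate_zero, Function.comp_apply, id_eq]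
  rw [← lc_braid G i j h, lc_invol, lc_invol, lc_invol]
end

section
/- For m ≥ 2, there exists a function f : ZMod m → {0, 2} with Σ_i f(i) = m such that every i with f(i) = 0 has both neighbors i−1 and i+1 satisfying f = 2, if and only if m is even. -/
lemma parity_flip (m : ℕ) [NeZero m] (hm : 2 ≤ m) (hme : Even m) (i : ZMod m) :
    Even ((i + 1).val) ↔ ¬ Even i.val := by
  haveI : Fact (1 < m) := ⟨by omega⟩
  have h1 : (1 : ZMod m).val = 1 := ZMod.val_one m
  have hv : i.val < m := ZMod.val_lt i
  have hadd : (i + 1).val = (i.val + 1) % m := by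
    rw [ZMod.val_add, h1]
  by_cases h : i.val + 1 = m
  · rw [hadd, h, Nat.mod_self]
    have hi : i.val = m - 1 := by omega
    constructor
    · intro _
      rw [hi]
      rcases hme with ⟨k, hk⟩
      intro ⟨j, hj⟩
      omega
    · intro _; exact Even.zero
  · rw [hadd, Nat.mod_eq_of_lt (by omega)]
    simp [Nat.even_add_one]

/-- In a ring of `m ≥ 2` entangled-pair sources, a masking configuration — each source
emits 0 or 2 pairs, `m` pairs in total, and every non-firing source has both cyclic
neighbours firing twice — exists if and only if `m` is even. -/
theorem ring_masking_iff_even (m : ℕ) [NeZero m] (hm : 2 ≤ m) :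
    (∃ f : ZMod m → ℕ, (∀ i, f i = 0 ∨ f i = 2) ∧ (∑ i, f i = m) ∧
      ∀ i, f i = 0 → f (i - 1) = 2 ∧ f (i + 1) = 2) ↔ Even m := by
  constructor
  · rintro ⟨f, h02, hsum, -⟩
    rw [← hsum]
    exact Finset.even_sum _ (fun i _ => by rcases h02 i with h | h <;> simp [h])
  · intro hme
    refine ⟨fun i => if Even i.val then 2 else 0, fun i => by by_cases h : Even i.val <;> simp [h],
      ?_, ?_⟩
    · -- sum
      set f : ZMod m → ℕ := fun i => if Even i.val then 2 else 0 with hf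
      have hpair : ∀ i : ZMod m, f i + f (i + 1) = 2 := by
        intro i
        have hfl := parity_flip m hm hme i
        by_cases h : Even i.val
        · have h2 : ¬ Even (i + 1).val := fun hc => (hfl.mp hc) h
          simp [hf, h, h2]
        · have h2 : Even (i + 1).val := hfl.mpr h
          simp [hf, h, h2]
      have hre : ∑ i : ZMod m, f (i + 1) = ∑ i : ZMod m, f i :=
        Fintype.sum_equiv (Equiv.addRight (1 : ZMod m)) _ _ (fun i => rfl)
      have h2 : ∑ i : ZMod m, (f i + f (i + 1)) = m * 2 := by
        rw [Finset.sum_congr rfl (fun i _ => hpair i), Finset.sum_const, Finset.card_univ,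
          ZMod.card, smul_eq_mul]
      rw [Finset.sum_add_distrib, hre, ← two_mul] at h2
      have hr : (∑ i : ZMod m, f i) = Finset.univ.sum f := rfl
      omega
    · intro i hi
      by_cases h : Even i.val
      · simp [h] at hi
      constructor
      · have hfl := parity_flip m hm hme (i - 1)
        rw [sub_add_cancel] at hfl
        have he : Even (i - 1).val := not_not.mp (mt hfl.mpr h)
        simp [he]
      · have he := (parity_flip m hm hme i).mpr h
        simp [he]
end
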